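/- If Assumption 1 holds and z = (x, w) is a solution of the layered networked SIWS model with x_i(0) ∈ [0,1] for all i ∈ {1,…,n} and w_j(0) ≥ 0 for all j ∈ {1,…,m}, then for every t ≥ 0 one has x_i(t) ∈ [0,1] for all i and w_j(t) ≥ 0 for all j; that is, the set 𝒟 is positively invariant for the SIWS dynamics. -/

import Mathlib

open Matrix

variable {n m : ℕ}

/-- The block matrix `B_f = [[B, B_w],[C_w, A_w − diag A_w]]`. -/
def BfM (B : Matrix (Fin n) (Fin n) ℝ) (Bw : Matrix (Fin n) (Fin m) ℝ)
    (Cw : Matrix (Fin m) (Fin n) ℝ) (Aw : Matrix (Fin m) (Fin m) ℝ) :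
    Matrix (Fin n ⊕ Fin m) (Fin n ⊕ Fin m) ℝ :=
  Matrix.fromBlocks B Bw Cw (Aw - Matrix.diagonal (fun j => Aw j j))

/-- The block diagonal matrix `D_f = blockdiag(D, D_w − diag A_w)`. -/
def DfM (δ : Fin n → ℝ) (δw : Fin m → ℝ) (Aw : Matrix (Fin m) (Fin m) ℝ) :
    Matrix (Fin n ⊕ Fin m) (Fin n ⊕ Fin m) ℝ :=
  Matrix.fromBlocks (Matrix.diagonal δ) 0 0 (Matrix.diagonal (fun j => δw j - Aw j j))

/-- `X(z) = diag(x_1,…,x_n,0,…,0)` for `z = (x,w)`. -/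
def XzM (z : Fin n ⊕ Fin m → ℝ) :
    Matrix (Fin n ⊕ Fin m) (Fin n ⊕ Fin m) ℝ :=
  Matrix.diagonal (Sum.elim (fun a => z (Sum.inl a)) (fun _ => (0:ℝ)))

/-- A (nonnegative) square matrix is irreducible if for every pair of indices `i, j`
there is `k ≥ 1` with `(M^k) i j > 0`. -/
def MatIrred {N : Type*} [Fintype N] [DecidableEq N] (M : Matrix N N ℝ) : Prop :=
  ∀ i j, ∃ k : ℕ, 1 ≤ k ∧ 0 < (M ^ k) i j

/-- The spectral radius of a real matrix: the supremum of the moduli of its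
complex eigenvalues. -/
noncomputable def specRad {N : Type*} [Fintype N] [DecidableEq N] (M : Matrix N N ℝ) : ENNReal :=
  spectralRadius ℂ (M.map (algebraMap ℝ ℂ))

open Filter Set

/- ### auxiliary lemmas -/

lemma hasDerivAt_posPartSq (s : ℝ) :
    HasDerivAt (fun x : ℝ => (max x 0)^2) (2 * max s 0) s := by
  rcases lt_trichotomy s 0 with h | h | h
  · have he : (fun x : ℝ => (max x 0)^2) =ᶠ[nhds s] (fun _ => (0:ℝ)) := by
      filter_upwards [Iio_mem_nhds h] with x hx
      simp [max_eq_right (mem_Iio.1 hx).le]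
    have h0 : HasDerivAt (fun _ : ℝ => (0:ℝ)) 0 s := hasDerivAt_const s 0
    have := h0.congr_of_eventuallyEq he
    simpa [max_eq_right h.le] using this
  · subst h
    rw [hasDerivAt_iff_tendsto_slope]
    have hb : ∀ z : ℝ, ‖slope (fun x : ℝ => (max x 0)^2) 0 z‖ ≤ ‖z‖ := by
      intro z
      rcases eq_or_ne z 0 with rfl | hz
      · simp [slope]
      · rw [slope_def_field]
        have h1 : |max z 0| ≤ |z| := by
          rcases le_or_gt z 0 with hz' | hz'
          · simp [max_eq_right hz', abs_nonneg]
          · simp [max_eq_left hz'.le]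
        have h2 : |(max z 0)^2| ≤ |z|^2 := by
          rw [abs_pow]; exact pow_le_pow_left₀ (abs_nonneg _) h1 2
        rw [Real.norm_eq_abs, Real.norm_eq_abs, abs_div]
        calc |(max z 0)^2 - (max (0:ℝ) 0)^2| / |z - 0| = |(max z 0)^2| / |z| := by simp
          _ ≤ |z|^2 / |z| := by gcongr
          _ = |z| := by field_simp [sq, abs_ne_zero.mpr hz]
    simpa using squeeze_zero_norm hb (tendsto_norm_zero.mono_left nhdsWithin_le_nhds)
  · have he : (fun x : ℝ => (max x 0)^2) =ᶠ[nhds s] (fun x => x^2) := by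
      filter_upwards [Ioi_mem_nhds h] with x hx
      simp [max_eq_left (le_of_lt (mem_Ioi.1 hx))]
    have h0 : HasDerivAt (fun x : ℝ => x^2) (2 * s) s := by
      simpa using (hasDerivAt_pow 2 s)
    have := h0.congr_of_eventuallyEq he
    simpa [max_eq_left h.le] using this

lemma DfM_diag (δ : Fin n → ℝ) (δw : Fin m → ℝ) (Aw : Matrix (Fin m) (Fin m) ℝ) :
    DfM δ δw Aw = Matrix.diagonal (Sum.elim δ (fun j => δw j - Aw j j)) := by
  rw [DfM, fromBlocks_diagonal]

lemma mulVec_f_apply (δ : Fin n → ℝ) (δw : Fin m → ℝ)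
    (B : Matrix (Fin n) (Fin n) ℝ) (Bw : Matrix (Fin n) (Fin m) ℝ)
    (Cw : Matrix (Fin m) (Fin n) ℝ) (Aw : Matrix (Fin m) (Fin m) ℝ)
    (v : Fin n ⊕ Fin m → ℝ) (k : Fin n ⊕ Fin m) :
    ((-(DfM δ δw Aw) + ((1 : Matrix (Fin n ⊕ Fin m) (Fin n ⊕ Fin m) ℝ) - XzM v) * BfM B Bw Cw Aw) *ᵥ v) k
      = -(DfM δ δw Aw k k) * v k
        + (1 - XzM v k k) * ((BfM B Bw Cw Aw) *ᵥ v) k := by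
  rw [add_mulVec, neg_mulVec, ← mulVec_mulVec, sub_mulVec, one_mulVec]
  rw [DfM_diag]
  simp only [XzM, mulVec_diagonal, Matrix.diagonal_apply_eq, Pi.add_apply, Pi.sub_apply,
    Pi.neg_apply]
  ring

lemma mul_sum_sq_le {ι : Type*} [Fintype ι] (P : ι → ℝ) (k : ι) :
    P k * ∑ l, P l ≤ (Fintype.card ι : ℝ) * ∑ l, (P l)^2 := by
  have hsq : (P k)^2 ≤ ∑ l, (P l)^2 :=
    Finset.single_le_sum (fun l _ => sq_nonneg (P l)) (Finset.mem_univ k)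
  have hφ : (0:ℝ) ≤ ∑ l, (P l)^2 := Finset.sum_nonneg fun l _ => sq_nonneg _
  have h1 : P k * ∑ l, P l ≤ ∑ l, ((P k)^2 + (P l)^2) / 2 := by
    rw [Finset.mul_sum]
    apply Finset.sum_le_sum
    intro l _
    nlinarith [sq_nonneg (P k - P l)]
  have h2 : ∑ l, ((P k)^2 + (P l)^2) / 2
      = ((Fintype.card ι : ℝ) * (P k)^2 + ∑ l, (P l)^2) / 2 := by
    rw [← Finset.sum_div, Finset.sum_add_distrib, Finset.sum_const, Finset.card_univ,
      nsmul_eq_mul]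
  rcases Nat.eq_zero_or_pos (Fintype.card ι) with h | h
  · have : IsEmpty ι := Fintype.card_eq_zero_iff.mp h
    exact absurd (Finset.mem_univ k) (by simp)
  · have hc : (1:ℝ) ≤ (Fintype.card ι : ℝ) := by exact_mod_cast h
    nlinarith [hsq, hφ, h1, h2.le, mul_le_mul_of_nonneg_left hsq (le_trans zero_le_one hc)]

lemma termA (dd p c r CB S N phi1 phi M : ℝ)
    (hd : 0 ≤ dd) (hp : 0 ≤ p) (hpc0 : 0 ≤ p * c) (hpc1 : p * c ≤ p + p^2)
    (hr : -r ≤ CB * S) (hS : 0 ≤ S) (hCB : 0 ≤ CB) (hpS : p * S ≤ N * phi1)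
    (hpM : p ≤ M) (hM : 0 ≤ M) (hphi : phi1 ≤ phi) (hphi0 : 0 ≤ phi1) (hN : 0 ≤ N) :
    -2*dd*p^2 - 2*(p*c)*r ≤ (2 * CB * (1 + M) * N) * phi := by
  have h1 : (p*c)*(-r) ≤ (p*c)*(CB*S) := mul_le_mul_of_nonneg_left hr hpc0
  have h2 : (p*c)*(CB*S) ≤ (p + p^2)*(CB*S) := mul_le_mul_of_nonneg_right hpc1 (mul_nonneg hCB hS)
  have h3 : p*(p*S) ≤ M*(N*phi1) := mul_le_mul hpM hpS (mul_nonneg hp hS) hM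
  have h4 : CB*(p*S) ≤ CB*(N*phi1) := mul_le_mul_of_nonneg_left hpS hCB
  have h5 : CB*(p*(p*S)) ≤ CB*(M*(N*phi1)) := mul_le_mul_of_nonneg_left h3 hCB
  have h6 : (2*CB*(1+M)*N)*phi1 ≤ (2*CB*(1+M)*N)*phi :=
    mul_le_mul_of_nonneg_left hphi
      (mul_nonneg (mul_nonneg (by linarith : (0:ℝ) ≤ 2*CB) (by linarith : (0:ℝ) ≤ 1+M)) hN)
  nlinarith [mul_nonneg hd (sq_nonneg p), h1, h2, h4, h5, h6]

lemma termC (dd q v c r CB S N M phi : ℝ)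
    (hd : 0 ≤ dd) (hq : 0 ≤ q) (hqv : 0 ≤ q * v) (hqc : q * c = -(q^2))
    (hr : -r ≤ CB*S) (hS : 0 ≤ S) (hCB : 0 ≤ CB) (hSNM : S ≤ N*M)
    (hq2 : q^2 ≤ phi) (hN : 0 ≤ N) (hM : 0 ≤ M) (hphi0 : 0 ≤ phi) :
    (2*q) * (-dd*v + c*r) ≤ (2*CB*N*M)*phi := by
  have e : (2*q) * (-dd*v + c*r) = -2*dd*(q*v) + 2*(q*c)*r := by ring
  rw [e, hqc]
  have h1 : (q^2)*(-r) ≤ (q^2)*(CB*S) := mul_le_mul_of_nonneg_left hr (sq_nonneg q)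
  have h2 : (q^2)*(CB*S) ≤ (q^2)*(CB*(N*M)) :=
    mul_le_mul_of_nonneg_left (mul_le_mul_of_nonneg_left hSNM hCB) (sq_nonneg q)
  have h3 : (q^2)*(CB*(N*M)) ≤ phi*(CB*(N*M)) :=
    mul_le_mul_of_nonneg_right hq2 (mul_nonneg hCB (mul_nonneg hN hM))
  nlinarith [mul_nonneg hd hqv, h1, h2, h3]


set_option maxHeartbeats 1000000 in
/-- Positive invariance of `𝒟` for the layered networked SIWS model
under Assumption 1. -/
theorem siws_D_positively_invariant {n m : ℕ} (hn : 0 < n) (hm : 0 < m)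
    (δ : Fin n → ℝ) (δw : Fin m → ℝ)
    (B : Matrix (Fin n) (Fin n) ℝ) (Bw : Matrix (Fin n) (Fin m) ℝ)
    (Cw : Matrix (Fin m) (Fin n) ℝ) (Aw : Matrix (Fin m) (Fin m) ℝ)
    (hBf : ∀ i j, 0 ≤ BfM B Bw Cw Aw i j)
    (hDf : ∀ i, 0 < DfM δ δw Aw i i)
    (z : ℝ → (Fin n ⊕ Fin m) → ℝ) (hdiff : Differentiable ℝ z)
    (hode : ∀ t : ℝ, 0 ≤ t →
      HasDerivAt z
        ((-(DfM δ δw Aw) +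
          ((1 : Matrix (Fin n ⊕ Fin m) (Fin n ⊕ Fin m) ℝ) - XzM (z t)) * BfM B Bw Cw Aw) *ᵥ z t) t)
    (hx0 : ∀ i : Fin n, z 0 (Sum.inl i) ∈ Set.Icc (0:ℝ) 1)
    (hw0 : ∀ j : Fin m, 0 ≤ z 0 (Sum.inr j)) :
    ∀ t : ℝ, 0 ≤ t →
      (∀ i : Fin n, z t (Sum.inl i) ∈ Set.Icc (0:ℝ) 1) ∧
      (∀ j : Fin m, 0 ≤ z t (Sum.inr j)) := by
  intro T hT
  classical
  have hzc : Continuous z := hdiff.continuous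
  set Bf : Matrix (Fin n ⊕ Fin m) (Fin n ⊕ Fin m) ℝ := BfM B Bw Cw Aw with hBfdef
  set dd : Fin n ⊕ Fin m → ℝ := Sum.elim δ (fun j => δw j - Aw j j) with hdddef
  have hdd : ∀ k, 0 < dd k := by
    intro k
    have h := hDf k
    rwa [DfM_diag, Matrix.diagonal_apply_eq] at h
  set F : ℝ → (Fin n ⊕ Fin m) → ℝ := fun t =>
    ((-(DfM δ δw Aw) +
      ((1 : Matrix (Fin n ⊕ Fin m) (Fin n ⊕ Fin m) ℝ) - XzM (z t)) * BfM B Bw Cw Aw) *ᵥ z t)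
    with hFdef
  set P : ℝ → (Fin n ⊕ Fin m) → ℝ := fun t k => max (-(z t k)) 0 with hPdef
  set Q : ℝ → Fin n → ℝ := fun t i => max (z t (Sum.inl i) - 1) 0 with hQdef
  set φ : ℝ → ℝ := fun t => (∑ k, (P t k)^2) + ∑ i, (Q t i)^2 with hφdef
  set φ' : ℝ → ℝ := fun t =>
    (∑ k, (2 * P t k) * (-(F t k))) + ∑ i, (2 * Q t i) * (F t (Sum.inl i)) with hφ'def
  have hP0 : ∀ t k, 0 ≤ P t k := fun t k => le_max_right _ _
  have hQ0 : ∀ t i, 0 ≤ Q t i := fun t i => le_max_right _ _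
  have hφ0 : ∀ t, 0 ≤ φ t := fun t =>
    add_nonneg (Finset.sum_nonneg fun k _ => sq_nonneg _)
      (Finset.sum_nonneg fun i _ => sq_nonneg _)
  -- bound on z over [0,T]
  obtain ⟨M, hM⟩ := (isCompact_Icc : IsCompact (Set.Icc (0:ℝ) T)).exists_bound_of_continuousOn
    hzc.continuousOn
  have hM0 : (0:ℝ) ≤ M := le_trans (norm_nonneg _) (hM 0 ⟨le_rfl, hT⟩)
  have hzM : ∀ s ∈ Set.Icc (0:ℝ) T, ∀ k, |z s k| ≤ M := fun s hs k =>
    le_trans (norm_le_pi_norm (z s) k) (hM s hs)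
  -- entrywise bound on Bf
  set CB : ℝ := ∑ k, ∑ l, Bf k l with hCBdef
  have hCBe : ∀ k l, Bf k l ≤ CB := by
    intro k l
    have h1 : Bf k l ≤ ∑ l', Bf k l' :=
      Finset.single_le_sum (fun l' _ => hBf k l') (Finset.mem_univ l)
    exact h1.trans (Finset.single_le_sum
      (fun k' _ => Finset.sum_nonneg fun l' _ => hBf k' l') (Finset.mem_univ k))
  have hCB0 : (0:ℝ) ≤ CB :=
    Finset.sum_nonneg fun k _ => Finset.sum_nonneg fun l _ => hBf k l
  set N : ℝ := (Fintype.card (Fin n ⊕ Fin m) : ℝ) with hNdef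
  have hN0 : (0:ℝ) ≤ N := Nat.cast_nonneg _
  set K : ℝ := N * (2*CB*(1+M)*N) + (n:ℝ) * (2*CB*N*M) with hKdef
  -- derivative of φ
  have hderiv : ∀ t, 0 ≤ t → HasDerivAt φ (φ' t) t := by
    intro t ht
    have hz' : ∀ k, HasDerivAt (fun s => z s k) (F t k) t := fun k =>
      (hasDerivAt_pi.1 (hode t ht)) k
    have hA : ∀ k ∈ Finset.univ, HasDerivAt (fun s => (P s k)^2) ((2 * P t k) * (-(F t k))) t := by
      intro k _
      have h := (hasDerivAt_posPartSq (-(z t k))).comp t ((hz' k).neg)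
      simpa [hPdef, Function.comp_def] using h
    have hB : ∀ i ∈ Finset.univ,
        HasDerivAt (fun s => (Q s i)^2) ((2 * Q t i) * (F t (Sum.inl i))) t := by
      intro i _
      have h := (hasDerivAt_posPartSq (z t (Sum.inl i) - 1)).comp t
        ((hz' (Sum.inl i)).sub_const 1)
      simpa [hQdef, Function.comp_def] using h
    have hφeq : φ = (∑ i, fun s => P s i ^ 2) + ∑ i, fun s => Q s i ^ 2 := by
      ext s
      simp [hφdef, Finset.sum_apply]
    rw [hφeq]
    exact (HasDerivAt.sum hA).add (HasDerivAt.sum hB)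
  -- continuity of φ
  have hφc : Continuous φ := by
    rw [hφdef]
    apply Continuous.add
    · exact continuous_finset_sum _ fun k _ =>
        (((continuous_apply k).comp hzc).neg.max continuous_const).pow 2
    · exact continuous_finset_sum _ fun i _ =>
        ((((continuous_apply (Sum.inl i)).comp hzc).sub continuous_const).max
          continuous_const).pow 2
  -- initial condition
  have hφinit : φ 0 = 0 := by
    have h1 : ∀ k, P 0 k = 0 := by
      intro k
      rcases k with a | b
      · exact max_eq_right (by linarith [(hx0 a).1])
      · exact max_eq_right (by linarith [hw0 b])
    have h2 : ∀ i, Q 0 i = 0 := fun i => max_eq_right (by linarith [(hx0 i).2])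
    simp [hφdef, h1, h2]
  -- the key differential inequality
  have hbound : ∀ t ∈ Set.Ico (0:ℝ) T, φ' t ≤ K * φ t + 0 := by
    intro t ht
    have htI : t ∈ Set.Icc (0:ℝ) T := ⟨ht.1, ht.2.le⟩
    have hφ₁ : (∑ l, (P t l)^2) ≤ φ t :=
      le_add_of_nonneg_right (Finset.sum_nonneg fun i _ => sq_nonneg _)
    have hφ₁0 : (0:ℝ) ≤ ∑ l, (P t l)^2 := Finset.sum_nonneg fun l _ => sq_nonneg _
    have hS0 : (0:ℝ) ≤ ∑ l, P t l := Finset.sum_nonneg fun l _ => hP0 t l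
    have hpM : ∀ k, P t k ≤ M := fun k =>
      max_le (le_trans (neg_le_abs _) (hzM t htI k)) hM0
    have hSM : (∑ l, P t l) ≤ N * M := by
      calc ∑ l, P t l ≤ ∑ _l : (Fin n ⊕ Fin m), M := Finset.sum_le_sum (fun l _ => hpM l)
        _ = N * M := by rw [Finset.sum_const, Finset.card_univ, nsmul_eq_mul]
    have hr : ∀ k, -((Bf *ᵥ z t) k) ≤ CB * ∑ l, P t l := by
      intro k
      have hmv : (Bf *ᵥ z t) k = ∑ l, Bf k l * z t l := by
        simp [Matrix.mulVec, dotProduct]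
      rw [hmv, ← Finset.sum_neg_distrib]
      calc ∑ l, -(Bf k l * z t l) ≤ ∑ l, CB * P t l := by
            apply Finset.sum_le_sum
            intro l _
            have hvl : -(z t l) ≤ P t l := le_max_left _ _
            have h1 : -(Bf k l * z t l) = Bf k l * (-(z t l)) := by ring
            rw [h1]
            calc Bf k l * (-(z t l)) ≤ Bf k l * P t l :=
                  mul_le_mul_of_nonneg_left hvl (hBf k l)
              _ ≤ CB * P t l := mul_le_mul_of_nonneg_right (hCBe k l) (hP0 t l)
        _ = CB * ∑ l, P t l := (Finset.mul_sum _ _ _).symm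
    have hpS : ∀ k, P t k * ∑ l, P t l ≤ N * ∑ l, (P t l)^2 := fun k =>
      mul_sum_sq_le (P t) k
    have hF : ∀ k, F t k = -(dd k) * z t k
        + (1 - Sum.elim (fun a => z t (Sum.inl a)) (fun _ => (0:ℝ)) k) * ((Bf *ᵥ z t) k) := by
      intro k
      have h := mulVec_f_apply δ δw B Bw Cw Aw (z t) k
      rw [hFdef]
      simpa [DfM_diag, Matrix.diagonal_apply_eq, XzM, hdddef, hBfdef] using h
    -- term A
    have hAk : ∀ k, (2 * P t k) * (-(F t k)) ≤ (2*CB*(1+M)*N) * φ t := by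
      intro k
      have hpx : P t k * z t k = -((P t k)^2) := by
        rcases le_or_gt 0 (z t k) with h | h
        · have hp : P t k = 0 := max_eq_right (by simp [hPdef]; linarith)
          rw [hp]; ring
        · have hp : P t k = -(z t k) := max_eq_left (by simp [hPdef]; linarith)
          rw [hp]; ring
      set c : ℝ := 1 - Sum.elim (fun a => z t (Sum.inl a)) (fun _ => (0:ℝ)) k with hcdef
      have hpc : 0 ≤ P t k * c ∧ P t k * c ≤ P t k + (P t k)^2 := by
        rcases k with a | b
        · rcases le_or_gt 0 (z t (Sum.inl a)) with h | h
          · have hp : P t (Sum.inl a) = 0 := max_eq_right (by simp [hPdef]; linarith)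
            constructor <;> rw [hp] <;> nlinarith
          · have hp : P t (Sum.inl a) = -(z t (Sum.inl a)) := max_eq_left (by linarith)
            have hc : c = 1 + P t (Sum.inl a) := by
              rw [hcdef]; simp only [Sum.elim_inl]; rw [hp]; ring
            constructor <;> rw [hc, hp] <;> nlinarith
        · have hc : c = 1 := by rw [hcdef]; simp
          rw [hc, mul_one]
          exact ⟨hP0 t _, by nlinarith [hP0 t (Sum.inr b), sq_nonneg (P t (Sum.inr b))]⟩
      have e : (2 * P t k) * (-(F t k))
          = -2*(dd k)*(P t k)^2 - 2*(P t k * c)*((Bf *ᵥ z t) k) := by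
        rw [hF k]
        linear_combination 2 * (dd k) * hpx
      rw [e]
      exact termA (dd k) (P t k) c ((Bf *ᵥ z t) k) CB (∑ l, P t l) N
        (∑ l, (P t l)^2) (φ t) M (hdd k).le (hP0 t k) hpc.1 hpc.2 (hr k) hS0 hCB0
        (hpS k) (hpM k) hM0 hφ₁ hφ₁0 hN0
    -- term C
    have hCi : ∀ i, (2 * Q t i) * (F t (Sum.inl i)) ≤ (2*CB*N*M) * φ t := by
      intro i
      have hq2 : (Q t i)^2 ≤ φ t := by
        have h1 : (Q t i)^2 ≤ ∑ i', (Q t i')^2 :=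
          Finset.single_le_sum (fun i' _ => sq_nonneg (Q t i')) (Finset.mem_univ i)
        exact h1.trans (le_add_of_nonneg_left hφ₁0)
      have hqv : 0 ≤ Q t i * z t (Sum.inl i) := by
        rcases le_or_gt (z t (Sum.inl i)) 1 with h | h
        · have hq : Q t i = 0 := max_eq_right (by linarith)
          rw [hq]; simp
        · have hq : Q t i = z t (Sum.inl i) - 1 := max_eq_left (by linarith)
          rw [hq]; nlinarith
      have hqc : Q t i * (1 - z t (Sum.inl i)) = -((Q t i)^2) := by
        rcases le_or_gt (z t (Sum.inl i)) 1 with h | h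
        · have hq : Q t i = 0 := max_eq_right (by linarith)
          rw [hq]; ring
        · have hq : Q t i = z t (Sum.inl i) - 1 := max_eq_left (by linarith)
          rw [hq]; ring
      have h := termC (dd (Sum.inl i)) (Q t i) (z t (Sum.inl i)) (1 - z t (Sum.inl i))
        ((Bf *ᵥ z t) (Sum.inl i)) CB (∑ l, P t l) N M (φ t)
        (hdd _).le (hQ0 t i) hqv hqc (hr _) hS0 hCB0 hSM hq2 hN0 hM0 (hφ0 t)
      rw [hF (Sum.inl i)]
      simpa [Sum.elim_inl] using h
    calc φ' t = (∑ k, (2*P t k)*(-(F t k))) + ∑ i, (2*Q t i)*(F t (Sum.inl i)) := by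
          rw [hφ'def]
      _ ≤ (∑ _k : Fin n ⊕ Fin m, (2*CB*(1+M)*N) * φ t) + ∑ _i : Fin n, (2*CB*N*M) * φ t :=
          add_le_add (Finset.sum_le_sum fun k _ => hAk k) (Finset.sum_le_sum fun i _ => hCi i)
      _ = K * φ t + 0 := by
          rw [Finset.sum_const, Finset.sum_const, Finset.card_univ, Finset.card_univ,
            nsmul_eq_mul, nsmul_eq_mul, hKdef, ← hNdef, Fintype.card_fin]
          ring
  -- Gronwall
  have hslope : ∀ x ∈ Set.Ico (0:ℝ) T, ∀ r, φ' x < r →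
      ∃ᶠ w in nhdsWithin x (Set.Ioi x), (w - x)⁻¹ * (φ w - φ x) < r := by
    intro x hx r hr
    have h := ((hderiv x hx.1).hasDerivWithinAt.liminf_right_slope_le hr)
    apply h.mono
    intro w hw
    rwa [slope_def_field, div_eq_inv_mul] at hw
  have hg := le_gronwallBound_of_liminf_deriv_right_le hφc.continuousOn hslope
    (le_of_eq hφinit) hbound T ⟨hT, le_rfl⟩
  rw [sub_zero, gronwallBound_ε0_δ0] at hg
  have hφT : φ T = 0 := le_antisymm hg (hφ0 T)
  simp only [hφdef] at hφT
  have hs2 : (0:ℝ) ≤ ∑ i, (Q T i)^2 := Finset.sum_nonneg fun i _ => sq_nonneg _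
  have hs3 : (0:ℝ) ≤ ∑ k, (P T k)^2 := Finset.sum_nonneg fun k _ => sq_nonneg _
  have h1 : ∑ k, (P T k)^2 = 0 := by linarith
  have h2 : ∑ i, (Q T i)^2 = 0 := by linarith
  have hPz : ∀ k, P T k = 0 := by
    intro k
    have := (Finset.sum_eq_zero_iff_of_nonneg (fun k _ => sq_nonneg (P T k))).1 h1 k
      (Finset.mem_univ k)
    exact (pow_eq_zero_iff (two_ne_zero)).1 this
  have hQz : ∀ i, Q T i = 0 := by
    intro i
    have := (Finset.sum_eq_zero_iff_of_nonneg (fun i _ => sq_nonneg (Q T i))).1 h2 i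
      (Finset.mem_univ i)
    exact (pow_eq_zero_iff (by norm_num)).1 this
  constructor
  · intro i
    constructor
    · have h := le_max_left (-(z T (Sum.inl i))) 0
      rw [show max (-(z T (Sum.inl i))) 0 = P T (Sum.inl i) from rfl, hPz (Sum.inl i)] at h
      linarith
    · have h := le_max_left (z T (Sum.inl i) - 1) 0
      rw [show max (z T (Sum.inl i) - 1) 0 = Q T i from rfl, hQz i] at h
      linarith
  · intro j
    have h := le_max_left (-(z T (Sum.inr j))) 0
    rw [show max (-(z T (Sum.inr j))) 0 = P T (Sum.inr j) from rfl, hPz (Sum.inr j)] at h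
    linarith
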